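/- arXiv:2209.12326 — 2 statements merged into one kernel-verified Lean document; each statement's English description precedes it below -/
import Mathlib

section
/- Fix an integer k ≥ 1. If a sequence A : ℕ → ℕ satisfies A(0) = 1 and, for every n ≥ 1, A(n) = Σ over all k-tuples (a_1,…,a_k) of non-negative integers with a_1 + ⋯ + a_k = n − 1 of the product A(a_1)·A(a_2)⋯A(a_k), then for every n, (k·n + 1)·A(n) = binom(k·n + 1, n); that is, A(n) = (1/(kn+1))·binom(kn+1, n), the n-th k-Catalan number. -/
/-- `fc k n p` is the coefficient of `X^n` in `F^p`, where `F` is the generating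
function of the `k`-Catalan numbers, satisfying `F = 1 + X * F^k`. -/
def fc (k : ℕ) : ℕ → ℕ → ℕ
  | 0, _ => 1
  | _+1, 0 => 0
  | n+1, p+1 => fc k (n+1) p + fc k n (p+k)
termination_by n p => (n, p)

lemma fc_zero (k p : ℕ) : fc k 0 p = 1 := by simp [fc]

lemma fc_zero_right (k n : ℕ) : fc k n 0 = if n = 0 then 1 else 0 := by
  cases n <;> simp [fc]

lemma fc_rec (k n p : ℕ) : fc k (n+1) (p+1) = fc k (n+1) p + fc k n (p+k) := by rw [fc]

lemma fc_conv (k : ℕ) :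
    ∀ n p q, fc k n (p+q) = ∑ ij ∈ Finset.HasAntidiagonal.antidiagonal n, fc k ij.1 p * fc k ij.2 q := by
  intro n
  induction n with
  | zero => intro p q; simp [fc_zero]
  | succ n ih =>
    intro p
    induction p with
    | zero =>
      intro q
      rw [Finset.Nat.antidiagonal_succ, Finset.sum_cons, Finset.sum_map]
      simp [fc_zero, fc_zero_right, Function.Embedding.coeFn_mk]
    | succ p ihp =>
      intro q
      have h1 : p + 1 + q = (p + q) + 1 := by omega
      rw [h1, fc_rec, ihp q, show p + q + k = (p+k) + q from by omega, ih (p+k) q]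
      rw [Finset.Nat.antidiagonal_succ, Finset.sum_cons, Finset.sum_cons, Finset.sum_map,
        Finset.sum_map]
      simp only [Function.Embedding.coeFn_mk, Function.Embedding.prodMap,
        Function.Embedding.refl_apply, fc_zero]
      simp only [Prod.map, fc_rec, add_mul]
      rw [Finset.sum_add_distrib]
      simp [Nat.succ_eq_add_one, add_comm, add_assoc, add_left_comm]

lemma tuple_succ (g : ℕ → ℕ) (j n : ℕ) :
    ∑ x ∈ Finset.Nat.antidiagonalTuple (j+1) n, ∏ i, g (x i)
      = ∑ ij ∈ Finset.HasAntidiagonal.antidiagonal n,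
          g ij.1 * ∑ y ∈ Finset.Nat.antidiagonalTuple j ij.2, ∏ i, g (y i) := by
  rw [eq_comm]
  simp_rw [Finset.mul_sum]
  rw [Finset.sum_sigma']
  refine Finset.sum_nbij' (fun a => Fin.cons a.1.1 a.2)
    (fun x => ⟨(x 0, ∑ i : Fin j, x i.succ), Fin.tail x⟩) ?_ ?_ ?_ ?_ ?_
  · rintro ⟨⟨a, b⟩, y⟩ h
    simp only [Finset.mem_sigma, Finset.HasAntidiagonal.mem_antidiagonal,
      Finset.Nat.mem_antidiagonalTuple] at h ⊢
    rw [Fin.sum_univ_succ]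
    simp only [Fin.cons_zero, Fin.cons_succ]
    rw [h.2]
    exact h.1
  · intro x hx
    simp only [Finset.Nat.mem_antidiagonalTuple] at hx
    simp only [Finset.mem_sigma, Finset.HasAntidiagonal.mem_antidiagonal, Finset.Nat.mem_antidiagonalTuple]
    refine ⟨?_, rfl⟩
    rw [← hx, Fin.sum_univ_succ]
  · rintro ⟨⟨a, b⟩, y⟩ h
    simp only [Finset.mem_sigma, Finset.HasAntidiagonal.mem_antidiagonal,
      Finset.Nat.mem_antidiagonalTuple] at h
    simp only [Fin.cons_zero, Fin.cons_succ, Fin.tail_cons]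
    congr 1
    exact Prod.ext rfl h.2
  · intro x hx
    simp [Fin.cons_self_tail]
  · rintro ⟨⟨a, b⟩, y⟩ h
    simp only
    rw [Fin.prod_univ_succ]
    simp [Fin.cons_zero, Fin.cons_succ]

lemma fc_tuple (k : ℕ) : ∀ j n, ∑ x ∈ Finset.Nat.antidiagonalTuple j n, ∏ i, fc k (x i) 1
    = fc k n j := by
  intro j
  induction j with
  | zero =>
    intro n
    cases n with
    | zero => simp [fc_zero]
    | succ n => simp [fc_zero_right]
  | succ j ihj =>
    intro n
    have h := tuple_succ (fun m => fc k m 1) j n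
    rw [h]
    have h2 : ∀ ij ∈ Finset.HasAntidiagonal.antidiagonal n,
        fc k ij.1 1 * (∑ y ∈ Finset.Nat.antidiagonalTuple j ij.2, ∏ i, fc k (y i) 1)
          = fc k ij.1 1 * fc k ij.2 j := by
      intro ij _
      rw [ihj]
    rw [Finset.sum_congr rfl h2, add_comm j 1, fc_conv]

lemma fc_closed (j : ℕ) : ∀ n p, ((j+1)*n+p) * fc (j+1) n p = p * Nat.choose ((j+1)*n+p) n := by
  intro n
  induction n with
  | zero => intro p; simp [fc]
  | succ n ih =>
    intro p
    induction p with
    | zero => simp [fc]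
    | succ p ihp =>
      have h2 := ih (p + (j+1))
      set N := (j+1)*(n+1)+p with hN
      have hN2 : (j+1)*n+(p+(j+1)) = N := by rw [hN]; ring
      rw [hN2] at h2
      have hNn : N = n + (j*n+j+1+p) := by rw [hN]; ring
      have hsub : N - n = j*n+j+1+p := by rw [hNn, Nat.add_sub_cancel_left]
      have hkey : Nat.choose N (n+1) * (n+1) = Nat.choose N n * (j*n+j+1+p) := by
        rw [Nat.choose_succ_right_eq, hsub]
      have hNpos : 0 < N := by positivity
      have hgoal : (j+1)*(n+1)+(p+1) = N + 1 := by omega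
      rw [hgoal, fc_rec, Nat.choose_succ_succ]
      apply Nat.eq_of_mul_eq_mul_left hNpos
      zify at h2 ihp hkey ⊢
      rw [hN] at *
      push_cast at *
      linear_combination (((j:ℤ)+1)*(n+1)+p+1) * ihp + (((j:ℤ)+1)*(n+1)+p+1) * h2 - ((j:ℤ)+1)*hkey

/-- Fix `k ≥ 1`. If `A 0 = 1` and, for every `n ≥ 1`,
`A n = Σ_{a₁+⋯+a_k = n-1} A a₁ ⋯ A a_k`, then
`(k·n+1)·A n = binom (k·n+1) n`, i.e. `A n` is the `n`-th `k`-Catalan number. -/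
theorem stmt_0 (k : ℕ) (hk : 1 ≤ k) (A : ℕ → ℕ) (h0 : A 0 = 1)
    (hrec : ∀ n : ℕ, 1 ≤ n →
      A n = ∑ x ∈ Finset.Nat.antidiagonalTuple k (n - 1), ∏ i : Fin k, A (x i)) :
    ∀ n : ℕ, (k * n + 1) * A n = (k * n + 1).choose n := by
  have hA : ∀ n, A n = fc k n 1 := by
    intro n
    induction n using Nat.strong_induction_on with
    | _ n ih =>
      match n with
      | 0 => rw [h0, fc_zero]
      | n + 1 =>
        rw [hrec (n+1) (by omega)]
        simp only [Nat.add_sub_cancel]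
        have hcong : ∀ x ∈ Finset.Nat.antidiagonalTuple k n,
            (∏ i, A (x i)) = ∏ i, fc k (x i) 1 := by
          intro x hx
          apply Finset.prod_congr rfl
          intro i _
          apply ih
          have hsum := Finset.Nat.mem_antidiagonalTuple.mp hx
          have : x i ≤ n := hsum ▸ Finset.single_le_sum (f := x)
            (fun _ _ => Nat.zero_le _) (Finset.mem_univ i)
          omega
        rw [Finset.sum_congr rfl hcong, fc_tuple k k n, fc_rec, fc_zero_right, zero_add]
        simp
  intro n
  obtain ⟨j, rfl⟩ : ∃ j, k = j + 1 := ⟨k - 1, by omega⟩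
  rw [hA n, ← one_mul (Nat.choose _ n)]
  exact fc_closed j n 1
end

section
/- For every n ≥ 0, Σ over all quadruples (a,b,c,d) of non-negative integers with a + b + c + d = n of the product C³_a·C³_b·C³_c·C³_d equals (4/(3n+4))·binom(3n+4, n); equivalently, (3n+4) · Σ_{a+b+c+d=n} C³_a C³_b C³_c C³_d = 4·binom(3n+4, n). (In Rothe-number notation this says A_n(4,3) is the fourfold convolution of the 3-Catalan numbers.) -/
/-- The `m`-th 3-Catalan number `C³_m = (1/(2m+1))·binom(3m,m)`, as a rational number. -/
noncomputable def threeCatalan (m : ℕ) : ℚ :=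
  ((3 * m).choose m : ℚ) / (2 * m + 1)

/-- Rothe numbers `A_n(x,3)` with convention `D 0 0 = 1`. -/
noncomputable def rothe (n x : ℕ) : ℚ :=
  if n = 0 then 1 else (x : ℚ) * ((x + 3 * n).choose n : ℚ) / (x + 3 * n)

lemma rothe_zero (x : ℕ) : rothe 0 x = 1 := if_pos rfl

lemma rothe_eq (n x : ℕ) (h : n ≠ 0 ∨ x ≠ 0) :
    rothe n x = (x : ℚ) * ((x + 3 * n).choose n : ℚ) / (x + 3 * n) := by
  rcases Nat.eq_zero_or_pos n with hn | hn
  · subst hn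
    rcases h with h | h
    · exact absurd rfl h
    · have hx : (x : ℚ) ≠ 0 := Nat.cast_ne_zero.mpr h
      simp [rothe, hx]
  · rw [rothe, if_neg hn.ne']

lemma rothe_succ_zero (n : ℕ) : rothe (n + 1) 0 = 0 := by
  rw [rothe_eq (n+1) 0 (Or.inl (Nat.succ_ne_zero n))]
  simp

lemma rothe_one (m : ℕ) : rothe m 1 = threeCatalan m := by
  rw [rothe_eq m 1 (Or.inr one_ne_zero), threeCatalan]
  have h1 : (3 * m + 1).choose (m + 1) * (m + 1) = (3 * m + 1).choose m * (3 * m + 1 - m) :=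
    Nat.choose_succ_right_eq _ _
  have h2 : (3 * m + 1) * (3 * m).choose m = (3 * m + 1).choose (m + 1) * (m + 1) :=
    Nat.add_one_mul_choose_eq _ _
  have h3 : 3 * m + 1 - m = 2 * m + 1 := by omega
  rw [h3] at h1
  have key : (3 * m + 1) * (3 * m).choose m = (3 * m + 1).choose m * (2 * m + 1) := by
    rw [h2, h1]
  have h4 : 1 + 3 * m = 3 * m + 1 := by omega
  rw [h4]
  have hq : ((3 * m + 1 : ℕ) : ℚ) * ((3 * m).choose m : ℚ)
      = ((3 * m + 1).choose m : ℚ) * ((2 * m + 1 : ℕ) : ℚ) := by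
    exact_mod_cast congrArg (Nat.cast : ℕ → ℚ) key
  push_cast at hq ⊢
  have d1 : (3 * (m : ℚ) + 1) ≠ 0 := by positivity
  have d2 : (2 * (m : ℚ) + 1) ≠ 0 := by positivity
  field_simp
  linarith [hq]

/-- Pascal-type recurrence for Rothe numbers. -/
lemma rothe_pascal (n x : ℕ) :
    rothe (n + 1) (x + 1) = rothe (n + 1) x + rothe n (x + 3) := by
  rw [rothe_eq (n+1) (x+1) (Or.inl (Nat.succ_ne_zero n)),
      rothe_eq (n+1) x (Or.inl (Nat.succ_ne_zero n)),
      rothe_eq n (x+3) (Or.inr (by omega))]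
  set M := x + 3 * n + 3 with hM
  have e1 : x + 1 + 3 * (n + 1) = M + 1 := by omega
  have e2 : x + 3 * (n + 1) = M := by omega
  have e3 : x + 3 + 3 * n = M := by omega
  rw [e1, e2, e3]
  have hp : (M + 1).choose (n + 1) = M.choose n + M.choose (n + 1) :=
    Nat.choose_succ_succ' M n
  have h2 : M.choose (n + 1) * (n + 1) = M.choose n * (M - n) :=
    Nat.choose_succ_right_eq _ _
  have h3 : M - n = x + 2 * n + 3 := by omega
  rw [h3] at h2
  have hpq : ((M + 1).choose (n + 1) : ℚ) = M.choose n + M.choose (n + 1) := by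
    exact_mod_cast congrArg (Nat.cast : ℕ → ℚ) hp
  have h2q : (M.choose (n + 1) : ℚ) * (n + 1) = M.choose n * ((x : ℚ) + 2 * n + 3) := by
    exact_mod_cast congrArg (Nat.cast : ℕ → ℚ) h2
  have hMq : (M : ℚ) = (x : ℚ) + 3 * n + 3 := by push_cast [hM]; ring
  have dM : (M : ℚ) ≠ 0 := by rw [hMq]; positivity
  have dM1 : ((M : ℚ) + 1) ≠ 0 := by rw [hMq]; positivity
  rw [hpq]
  push_cast
  field_simp
  linear_combination (3*((x:ℚ)+3*n+3)) * h2q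

lemma threeCatalan_zero : threeCatalan 0 = 1 := by simp [threeCatalan]

/-- Convolution of 3-Catalan numbers with Rothe numbers. -/
lemma conv_rothe (n : ℕ) : ∀ x : ℕ,
    (∑ p ∈ Finset.HasAntidiagonal.antidiagonal n, threeCatalan p.1 * rothe p.2 x) = rothe n (x + 1) := by
  induction n with
  | zero =>
    intro x
    simp [threeCatalan_zero, rothe_zero]
  | succ n ih =>
    intro x
    induction x with
    | zero =>
      rw [Finset.Nat.sum_antidiagonal_succ']
      have hz : ∀ p ∈ Finset.HasAntidiagonal.antidiagonal n,
          threeCatalan p.1 * rothe (p.2 + 1) 0 = 0 := by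
        intro p _
        rw [rothe_succ_zero]; ring
      rw [Finset.sum_congr rfl hz]
      simp [rothe_zero, rothe_one]
    | succ x ihx =>
      rw [Finset.Nat.sum_antidiagonal_succ']
      have hsplit : ∀ p ∈ Finset.HasAntidiagonal.antidiagonal n,
          threeCatalan p.1 * rothe (p.2 + 1) (x + 1)
            = threeCatalan p.1 * rothe (p.2 + 1) x + threeCatalan p.1 * rothe p.2 (x + 3) := by
        intro p _
        rw [rothe_pascal]; ring
      rw [Finset.sum_congr rfl hsplit, Finset.sum_add_distrib]
      have h2 : (∑ p ∈ Finset.HasAntidiagonal.antidiagonal n, threeCatalan p.1 * rothe p.2 (x + 3))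
          = rothe n (x + 4) := by
        have := ih (x + 3); rw [this]
      rw [h2]
      have h1 : threeCatalan (n + 1) * rothe 0 (x + 1)
            + ∑ p ∈ Finset.HasAntidiagonal.antidiagonal n, threeCatalan p.1 * rothe (p.2 + 1) x
          = rothe (n + 1) (x + 1) := by
        rw [← ihx, Finset.Nat.sum_antidiagonal_succ', rothe_zero, rothe_zero]
      have h3 := rothe_pascal n (x + 1)
      rw [show x + 1 + 3 = x + 4 from by omega] at h3
      rw [rothe_zero, mul_one] at h1
      rw [h3, ← h1]
      ring_nf
      rw [rothe_zero, mul_one]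

open Finset in
lemma tuple_split (k n : ℕ) (f : (Fin (k + 1) → ℕ) → ℚ) :
    ∑ x ∈ Finset.Nat.antidiagonalTuple (k + 1) n, f x
      = ∑ p ∈ Finset.HasAntidiagonal.antidiagonal n,
          ∑ y ∈ Finset.Nat.antidiagonalTuple k p.2, f (Fin.cons p.1 y) := by
  symm
  rw [Finset.sum_sigma']
  symm
  refine Finset.sum_nbij' (i := fun (x : Fin (k + 1) → ℕ) => (⟨(x 0, ∑ i : Fin k, x i.succ), Fin.tail x⟩ :
      Σ _p : ℕ × ℕ, Fin k → ℕ))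
    (j := fun q => (Fin.cons q.1.1 q.2 : Fin (k + 1) → ℕ)) ?_ ?_ ?_ ?_ ?_
  · intro x hx
    rw [Finset.Nat.mem_antidiagonalTuple] at hx
    rw [Finset.mem_sigma]
    constructor
    · rw [Finset.HasAntidiagonal.mem_antidiagonal]
      rw [← hx, Fin.sum_univ_succ]
    · rw [Finset.Nat.mem_antidiagonalTuple]
      rfl
  · intro q hq
    rw [Finset.mem_sigma] at hq
    rw [Finset.Nat.mem_antidiagonalTuple, Fin.sum_cons]
    rw [Finset.Nat.mem_antidiagonalTuple.mp hq.2]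
    exact Finset.HasAntidiagonal.mem_antidiagonal.mp hq.1
  · intro x _
    exact Fin.cons_self_tail x
  · intro q hq
    rcases q with ⟨⟨a, b⟩, y⟩
    rw [Finset.mem_sigma] at hq
    simp only [Fin.cons_zero, Fin.cons_succ, Fin.tail_cons]
    congr 1
    exact congrArg _ (Finset.Nat.mem_antidiagonalTuple.mp hq.2)
  · intro x _
    exact congrArg f (Fin.cons_self_tail x).symm

/-- Sum of products of 3-Catalan numbers over antidiagonal tuples equals Rothe numbers. -/
lemma tuple_sum_eq (k : ℕ) : ∀ n : ℕ,
    (∑ x ∈ Finset.Nat.antidiagonalTuple k n, ∏ i, threeCatalan (x i)) = rothe n k := by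
  induction k with
  | zero =>
    intro n
    cases n with
    | zero => simp [rothe_zero]
    | succ n => simp [rothe_succ_zero]
  | succ k ih =>
    intro n
    rw [tuple_split]
    have : ∀ p ∈ Finset.HasAntidiagonal.antidiagonal n,
        (∑ y ∈ Finset.Nat.antidiagonalTuple k p.2, ∏ i, threeCatalan ((Fin.cons p.1 y : Fin (k+1) → ℕ) i))
          = threeCatalan p.1 * rothe p.2 k := by
      intro p _
      rw [← ih p.2, Finset.mul_sum]
      apply Finset.sum_congr rfl
      intro y _
      rw [Fin.prod_univ_succ]
      simp [Fin.cons_zero, Fin.cons_succ]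
    rw [Finset.sum_congr rfl this, conv_rothe]

/-- For every `n ≥ 0`,
`Σ_{a+b+c+d=n} C³_a·C³_b·C³_c·C³_d = (4/(3n+4))·binom(3n+4,n)`, equivalently
`(3n+4) · Σ_{a+b+c+d=n} C³_a C³_b C³_c C³_d = 4·binom(3n+4,n)`. -/
theorem stmt_1 (n : ℕ) :
    ((3 * n + 4 : ℕ) : ℚ) *
        ∑ x ∈ Finset.Nat.antidiagonalTuple 4 n,
          threeCatalan (x 0) * threeCatalan (x 1) * threeCatalan (x 2) * threeCatalan (x 3) =
      4 * ((3 * n + 4).choose n : ℚ) := by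
  have hprod : ∀ x : Fin 4 → ℕ,
      threeCatalan (x 0) * threeCatalan (x 1) * threeCatalan (x 2) * threeCatalan (x 3)
        = ∏ i, threeCatalan (x i) := by
    intro x
    rw [Fin.prod_univ_four]
  simp only [hprod]
  rw [tuple_sum_eq 4 n, rothe_eq n 4 (Or.inr (by omega))]
  have e : 4 + 3 * n = 3 * n + 4 := by omega
  rw [e]
  have d : ((3 * n + 4 : ℕ) : ℚ) ≠ 0 := by positivity
  push_cast at d ⊢
  field_simp
  ring
end
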